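/- arXiv:1409.7500 — 5 statements merged into one kernel-verified Lean document; each statement's English description precedes it below -/
import Mathlib

section
/- If the X-ray transform is injective on compactly supported continuous functions on ℝ², then the broken ray transform on the closed upper half plane with reflecting set R = ℝ × {0} is injective: any compactly supported continuous function f on ℝ × [0,∞) whose integral over every broken ray (straight lines and lines reflecting once off the x-axis) vanishes must be identically zero. -/
open MeasureTheory

/-- if the X-ray transform on ℝ² is injective on compactly supported
continuous functions, then the broken ray transform on the closed upper half plane
with reflecting set `ℝ × {0}` is injective: a compactly supported continuous function
on the half plane integrating to zero over all broken rays (horizontal lines contained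
in the half plane and rays reflecting once off the x-axis) vanishes. -/
theorem stmt1
    (hxray : ∀ g : ℝ × ℝ → ℝ, Continuous g → HasCompactSupport g →
      (∀ p v : ℝ × ℝ, v.1 ^ 2 + v.2 ^ 2 = 1 →
        (∫ t : ℝ, g (p.1 + t * v.1, p.2 + t * v.2)) = 0) → ∀ x, g x = 0)
    (f : ℝ × ℝ → ℝ) (hf : Continuous f) (hsupp : HasCompactSupport f)
    (hlines : ∀ p v : ℝ × ℝ, 0 ≤ p.2 → v.1 ^ 2 + v.2 ^ 2 = 1 → v.2 = 0 →
      (∫ t : ℝ, f (p.1 + t * v.1, p.2 + t * v.2)) = 0)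
    (hbroken : ∀ (a : ℝ) (v : ℝ × ℝ), v.1 ^ 2 + v.2 ^ 2 = 1 → 0 < v.2 →
      (∫ t in Set.Iic (0 : ℝ), f (a + t * v.1, -(t * v.2))) +
        (∫ t in Set.Ici (0 : ℝ), f (a + t * v.1, t * v.2)) = 0) :
    ∀ x : ℝ × ℝ, 0 ≤ x.2 → f x = 0 := by
  set g : ℝ × ℝ → ℝ := fun x => f (x.1, |x.2|) with hgdef
  have hgc : Continuous g :=
    hf.comp (continuous_fst.prodMk (continuous_abs.comp continuous_snd))
  obtain ⟨R, hR⟩ : ∃ R : ℝ, tsupport f ⊆ Metric.closedBall 0 R :=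
    hsupp.isBounded.subset_closedBall (0 : ℝ × ℝ)
  have hfR : ∀ x : ℝ × ℝ, f x ≠ 0 → ‖x‖ ≤ R := by
    intro x hx
    have := hR (subset_tsupport f hx)
    simpa [Metric.mem_closedBall, dist_zero_right] using this
  have hgball : ∀ x : ℝ × ℝ, g x ≠ 0 → ‖x‖ ≤ R := by
    intro x hx
    have h1 := hfR _ hx
    have hx2 : ‖x‖ = ‖((x.1, |x.2|) : ℝ × ℝ)‖ := by
      simp [Prod.norm_def, Real.norm_eq_abs, abs_abs]
    rw [hx2]; exact h1
  have hgR : ∀ x : ℝ × ℝ, g x ≠ 0 → |x.2| ≤ R := by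
    intro x hx
    calc |x.2| = ‖x.2‖ := (Real.norm_eq_abs _).symm
      _ ≤ ‖x‖ := norm_snd_le x
      _ ≤ R := hgball x hx
  have hgs : HasCompactSupport g := by
    apply HasCompactSupport.intro (isCompact_closedBall (0 : ℝ × ℝ) R)
    intro x hx
    by_contra h
    exact hx (by simpa [Metric.mem_closedBall, dist_zero_right] using hgball x h)
  -- the broken ray case after recentering at the reflection point
  have key : ∀ (a : ℝ) (v : ℝ × ℝ), v.1 ^ 2 + v.2 ^ 2 = 1 → 0 < v.2 →
      (∫ s : ℝ, g (a + s * v.1, s * v.2)) = 0 := by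
    intro a v hv hv2
    have hcont : Continuous fun s : ℝ => g (a + s * v.1, s * v.2) :=
      hgc.comp ((continuous_const.add (continuous_id.mul continuous_const)).prodMk
        (continuous_id.mul continuous_const))
    have hK : HasCompactSupport fun s : ℝ => g (a + s * v.1, s * v.2) := by
      apply HasCompactSupport.intro (isCompact_Icc (a := -(R / v.2)) (b := R / v.2))
      intro s hs
      by_contra h
      apply hs
      have h2 : |s * v.2| ≤ R := hgR _ h
      rw [abs_mul, abs_of_pos hv2] at h2
      have hsle : |s| ≤ R / v.2 := (le_div_iff₀ hv2).2 h2
      constructor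
      · linarith [neg_abs_le s]
      · linarith [le_abs_self s]
    have hint : Integrable fun s : ℝ => g (a + s * v.1, s * v.2) :=
      hcont.integrable_of_hasCompactSupport hK
    rw [← intervalIntegral.integral_Iic_add_Ioi (b := (0 : ℝ)) hint.integrableOn hint.integrableOn]
    have e1 : (∫ s in Set.Iic (0 : ℝ), g (a + s * v.1, s * v.2)) =
        ∫ s in Set.Iic (0 : ℝ), f (a + s * v.1, -(s * v.2)) := by
      apply setIntegral_congr_fun measurableSet_Iic
      intro s hs
      simp only [hgdef]
      rw [abs_of_nonpos (mul_nonpos_of_nonpos_of_nonneg hs hv2.le)]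
    have e2 : (∫ s in Set.Ioi (0 : ℝ), g (a + s * v.1, s * v.2)) =
        ∫ s in Set.Ici (0 : ℝ), f (a + s * v.1, s * v.2) := by
      rw [← integral_Ici_eq_integral_Ioi]
      apply setIntegral_congr_fun measurableSet_Ici
      intro s hs
      simp only [hgdef]
      rw [abs_of_nonneg (mul_nonneg hs hv2.le)]
    rw [e1, e2]
    exact hbroken a v hv hv2
  -- lines with upward direction
  have pos_case : ∀ p v : ℝ × ℝ, v.1 ^ 2 + v.2 ^ 2 = 1 → 0 < v.2 →
      (∫ t : ℝ, g (p.1 + t * v.1, p.2 + t * v.2)) = 0 := by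
    intro p v hv hv2
    set t0 : ℝ := -(p.2 / v.2) with ht0
    set a : ℝ := p.1 + t0 * v.1 with ha
    have hshift := integral_add_right_eq_self (μ := volume)
      (fun t : ℝ => g (p.1 + t * v.1, p.2 + t * v.2)) t0
    rw [← hshift]
    have heq : ∀ s : ℝ, g (p.1 + (s + t0) * v.1, p.2 + (s + t0) * v.2) =
        g (a + s * v.1, s * v.2) := by
      intro s
      congr 2
      · rw [ha]; ring
      · rw [ht0]; field_simp; ring
    simp only [heq]
    exact key a v hv hv2
  have hg0 : ∀ x, g x = 0 := by
    apply hxray g hgc hgs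
    intro p v hv
    rcases lt_trichotomy v.2 0 with h | h | h
    · have hv' : ((-v.1, -v.2) : ℝ × ℝ).1 ^ 2 + ((-v.1, -v.2) : ℝ × ℝ).2 ^ 2 = 1 := by
        simpa using hv
      have h' := pos_case p (-v.1, -v.2) hv' (by simpa using h)
      have hneg := integral_neg_eq_self
        (fun t : ℝ => g (p.1 + t * -v.1, p.2 + t * -v.2)) volume
      calc (∫ t : ℝ, g (p.1 + t * v.1, p.2 + t * v.2))
          = ∫ t : ℝ, g (p.1 + -t * -v.1, p.2 + -t * -v.2) := by
            simp only [neg_mul_neg]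
        _ = ∫ t : ℝ, g (p.1 + t * -v.1, p.2 + t * -v.2) := hneg
        _ = 0 := h'
    · have : ∀ t : ℝ, g (p.1 + t * v.1, p.2 + t * v.2) =
          f ((p.1, |p.2|).1 + t * v.1, (p.1, |p.2|).2 + t * v.2) := by
        intro t
        simp [hgdef, h]
      simp only [this]
      exact hlines (p.1, |p.2|) v (by simp [abs_nonneg]) hv h
    · exact pos_case p v hv h
  intro x hx
  have := hg0 x
  simpa [hgdef, abs_of_nonneg hx] using this
end

section
/- The Abel transform is injective on continuous functions: if a : [0,1] → ℝ is continuous and ∫_z^1 a(r) · r / √(r² − z²) dr = 0 for all z ∈ (0,1), then a ≡ 0. -/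
open MeasureTheory
open Set Real intervalIntegral

lemma int_inv_sqrt (b : ℝ) : IntervalIntegrable (fun x => 1 / Real.sqrt x) volume 0 b := by
  rcases le_or_gt b 0 with hb | hb
  · have : IntervalIntegrable (fun _ : ℝ => (0:ℝ)) volume 0 b := intervalIntegrable_const
    apply this.congr_ae
    rw [Filter.eventuallyEq_iff_exists_mem]
    refine ⟨Set.Iic 0, ?_, ?_⟩
    · rw [uIoc_of_ge hb]
      exact Filter.mem_of_superset (self_mem_ae_restrict measurableSet_Ioc)
        (fun x hx => hx.2)
    · intro x hx
      have : Real.sqrt x = 0 := Real.sqrt_eq_zero'.mpr hx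
      simp only [this, div_zero]
  · have h1 : IntervalIntegrable (fun x : ℝ => x ^ (-(1/2) : ℝ)) volume 0 b :=
      intervalIntegrable_rpow' (by norm_num)
    apply h1.congr_ae
    rw [Filter.eventuallyEq_iff_exists_mem]
    refine ⟨Set.Ioi 0, ?_, ?_⟩
    · rw [uIoc_of_le hb.le]
      exact Filter.mem_of_superset (self_mem_ae_restrict measurableSet_Ioc)
        (fun x hx => hx.1)
    · intro x hx
      simp only
      rw [Real.rpow_neg (le_of_lt hx), ← Real.sqrt_eq_rpow]
      exact inv_eq_one_div _

lemma sqrt_fact {y r z : ℝ} (hy : 0 < y) (hz : z ∈ Set.Ioo y r) :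
    Real.sqrt (1 - ((2*z^2 - y^2 - r^2)/(r^2 - y^2))^2)
      = 2 * Real.sqrt (z^2 - y^2) * Real.sqrt (r^2 - z^2) / (r^2 - y^2) := by
  obtain ⟨h1, h2⟩ := hz
  have hd : (0:ℝ) < r^2 - y^2 := by nlinarith
  have hA : (0:ℝ) ≤ z^2 - y^2 := by nlinarith
  have hB : (0:ℝ) ≤ r^2 - z^2 := by nlinarith
  have key : 1 - ((2*z^2 - y^2 - r^2)/(r^2 - y^2))^2
      = (2 * Real.sqrt (z^2 - y^2) * Real.sqrt (r^2 - z^2) / (r^2 - y^2))^2 := by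
    have e1 : Real.sqrt (z^2 - y^2) ^ 2 = z^2 - y^2 := Real.sq_sqrt hA
    have e2 : Real.sqrt (r^2 - z^2) ^ 2 = r^2 - z^2 := Real.sq_sqrt hB
    field_simp
    nlinarith [e1, e2]
  rw [key, Real.sqrt_sq (by positivity)]

lemma kern_deriv {y r z : ℝ} (hy : 0 < y) (hz : z ∈ Set.Ioo y r) :
    HasDerivAt (fun t => (1/2) * Real.arcsin ((2*t^2 - y^2 - r^2)/(r^2 - y^2)))
      (z / (Real.sqrt (z^2 - y^2) * Real.sqrt (r^2 - z^2))) z := by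
  obtain ⟨h1, h2⟩ := hz
  have hd : (0:ℝ) < r^2 - y^2 := by nlinarith
  have hA : (0:ℝ) < z^2 - y^2 := by nlinarith
  have hB : (0:ℝ) < r^2 - z^2 := by nlinarith
  set u : ℝ → ℝ := fun t => (2*t^2 - y^2 - r^2)/(r^2 - y^2) with hu
  have hu' : HasDerivAt u (4*z/(r^2 - y^2)) z := by
    have base : HasDerivAt (fun t : ℝ => 2*t^2 - y^2 - r^2) (4*z) z := by
      have h := ((hasDerivAt_pow 2 z).const_mul (2:ℝ)).sub_const (y^2)
      have h2 := h.sub_const (r^2)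
      exact h2.congr_deriv (by norm_num; ring)
    have := base.div_const (r^2 - y^2)
    convert this using 1
  have hne1 : u z ≠ -1 := by
    simp only [hu]
    intro hh
    rw [div_eq_iff hd.ne'] at hh
    nlinarith
  have hne2 : u z ≠ 1 := by
    simp only [hu]
    intro hh
    rw [div_eq_iff hd.ne'] at hh
    nlinarith
  have harc := (Real.hasDerivAt_arcsin hne1 hne2).comp z hu'
  have hs := sqrt_fact hy ⟨h1, h2⟩
  refine (harc.const_mul (1/2 : ℝ)).congr_deriv ?_
  simp only [hu, Function.comp_apply] at hs ⊢
  rw [hs]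
  have s1 : Real.sqrt (z^2 - y^2) > 0 := Real.sqrt_pos.mpr hA
  have s2 : Real.sqrt (r^2 - z^2) > 0 := Real.sqrt_pos.mpr hB
  field_simp
  ring

noncomputable def kern (y r : ℝ) : ℝ → ℝ :=
  fun z => z / (Real.sqrt (z^2 - y^2) * Real.sqrt (r^2 - z^2))

lemma kern_meas (y r : ℝ) : Measurable (kern y r) := by
  unfold kern
  exact measurable_id.div ((Real.continuous_sqrt.measurable.comp
    ((measurable_id.pow_const 2).sub_const _)).mul
    (Real.continuous_sqrt.measurable.comp
      ((measurable_const.sub (measurable_id.pow_const 2)))))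

lemma kern_nonneg {y r : ℝ} (z : ℝ) (hz : 0 ≤ z) : 0 ≤ kern y r z := by
  unfold kern; positivity

lemma kern_integrable {y r : ℝ} (hy : 0 < y) (hyr : y < r) :
    IntervalIntegrable (kern y r) volume y r := by
  set m := (y + r) / 2 with hm
  have hym : y < m := by rw [hm]; linarith
  have hmr : m < r := by rw [hm]; linarith
  have hmpos : 0 < m := by linarith
  -- part 1 : on [y, m]
  have p1 : IntervalIntegrable (kern y r) volume y m := by
    set C1 : ℝ := r / (Real.sqrt (2*y) * Real.sqrt (r^2 - m^2)) with hC1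
    have hg : IntervalIntegrable (fun z => C1 * (1 / Real.sqrt (z - y))) volume y m := by
      have := ((int_inv_sqrt (m - y)).comp_sub_right y).const_mul C1
      simpa using this
    apply hg.mono_fun' ((kern_meas y r).aestronglyMeasurable)
    rw [uIoc_of_le hym.le]
    refine (ae_restrict_iff' measurableSet_Ioc).mpr (Filter.Eventually.of_forall ?_)
    intro z hz
    obtain ⟨hz1, hz2⟩ := hz
    have hz0 : 0 < z := lt_trans hy hz1
    have hA : (0:ℝ) < z^2 - y^2 := by nlinarith
    have hB : (0:ℝ) < r^2 - z^2 := by nlinarith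
    have e1 : Real.sqrt (z^2 - y^2) = Real.sqrt (z + y) * Real.sqrt (z - y) := by
      rw [← Real.sqrt_mul (by linarith)]; ring_nf
    have ge1 : Real.sqrt (2*y) * Real.sqrt (z - y) ≤ Real.sqrt (z^2 - y^2) := by
      rw [e1]
      exact mul_le_mul_of_nonneg_right (Real.sqrt_le_sqrt (by linarith)) (Real.sqrt_nonneg _)
    have ge2 : Real.sqrt (r^2 - m^2) ≤ Real.sqrt (r^2 - z^2) :=
      Real.sqrt_le_sqrt (by nlinarith)
    have hd' : 0 < Real.sqrt (2*y) * Real.sqrt (z - y) * Real.sqrt (r^2 - m^2) := by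
      have h1 : (0:ℝ) < 2*y := by linarith
      have h2 : (0:ℝ) < z - y := by linarith
      have h3 : (0:ℝ) < r^2 - m^2 := by nlinarith
      positivity
    have hnorm : ‖kern y r z‖ = kern y r z := Real.norm_of_nonneg (kern_nonneg z hz0.le)
    simp only [hnorm]
    unfold kern
    calc z / (Real.sqrt (z^2 - y^2) * Real.sqrt (r^2 - z^2))
        ≤ r / (Real.sqrt (2*y) * Real.sqrt (z - y) * Real.sqrt (r^2 - m^2)) := by
          apply div_le_div₀ (by linarith) (by linarith) hd'
          calc Real.sqrt (2*y) * Real.sqrt (z - y) * Real.sqrt (r^2 - m^2)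
              ≤ Real.sqrt (z^2 - y^2) * Real.sqrt (r^2 - m^2) :=
                mul_le_mul_of_nonneg_right ge1 (Real.sqrt_nonneg _)
            _ ≤ Real.sqrt (z^2 - y^2) * Real.sqrt (r^2 - z^2) :=
                mul_le_mul_of_nonneg_left ge2 (Real.sqrt_nonneg _)
      _ = C1 * (1 / Real.sqrt (z - y)) := by
          rw [hC1]
          have s1 : Real.sqrt (z - y) > 0 := Real.sqrt_pos.mpr (by linarith)
          have s2 : Real.sqrt (2*y) > 0 := Real.sqrt_pos.mpr (by linarith)
          have s3 : Real.sqrt (r^2 - m^2) > 0 := Real.sqrt_pos.mpr (by nlinarith)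
          field_simp
  -- part 2 : on [m, r]
  have p2 : IntervalIntegrable (kern y r) volume m r := by
    set C2 : ℝ := r / (Real.sqrt (m^2 - y^2) * Real.sqrt (2*m)) with hC2
    have hg : IntervalIntegrable (fun z => C2 * (1 / Real.sqrt (r - z))) volume m r := by
      have := (((int_inv_sqrt (r - m)).comp_sub_left r).symm).const_mul C2
      simpa using this
    apply hg.mono_fun' ((kern_meas y r).aestronglyMeasurable)
    rw [uIoc_of_le hmr.le]
    refine (ae_restrict_iff' measurableSet_Ioc).mpr (Filter.Eventually.of_forall ?_)
    intro z hz
    obtain ⟨hz1, hz2⟩ := hz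
    rcases eq_or_lt_of_le hz2 with rfl | hz2
    · unfold kern
      simp
    have hz0 : 0 < z := lt_trans hmpos hz1
    have hA : (0:ℝ) < z^2 - y^2 := by nlinarith
    have e1 : Real.sqrt (r^2 - z^2) = Real.sqrt (r + z) * Real.sqrt (r - z) := by
      rw [← Real.sqrt_mul (by linarith)]; ring_nf
    have ge1 : Real.sqrt (2*m) * Real.sqrt (r - z) ≤ Real.sqrt (r^2 - z^2) := by
      rw [e1]
      exact mul_le_mul_of_nonneg_right (Real.sqrt_le_sqrt (by linarith)) (Real.sqrt_nonneg _)
    have ge2 : Real.sqrt (m^2 - y^2) ≤ Real.sqrt (z^2 - y^2) :=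
      Real.sqrt_le_sqrt (by nlinarith)
    have hd' : 0 < Real.sqrt (m^2 - y^2) * (Real.sqrt (2*m) * Real.sqrt (r - z)) := by
      have h1 : (0:ℝ) < 2*m := by linarith
      have h2 : (0:ℝ) < r - z := by linarith
      have h3 : (0:ℝ) < m^2 - y^2 := by nlinarith
      positivity
    have hnorm : ‖kern y r z‖ = kern y r z := Real.norm_of_nonneg (kern_nonneg z hz0.le)
    simp only [hnorm]
    unfold kern
    calc z / (Real.sqrt (z^2 - y^2) * Real.sqrt (r^2 - z^2))
        ≤ r / (Real.sqrt (m^2 - y^2) * (Real.sqrt (2*m) * Real.sqrt (r - z))) := by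
          apply div_le_div₀ (by linarith) (by linarith) hd'
          calc Real.sqrt (m^2 - y^2) * (Real.sqrt (2*m) * Real.sqrt (r - z))
              ≤ Real.sqrt (m^2 - y^2) * Real.sqrt (r^2 - z^2) :=
                mul_le_mul_of_nonneg_left ge1 (Real.sqrt_nonneg _)
            _ ≤ Real.sqrt (z^2 - y^2) * Real.sqrt (r^2 - z^2) :=
                mul_le_mul_of_nonneg_right ge2 (Real.sqrt_nonneg _)
      _ = C2 * (1 / Real.sqrt (r - z)) := by
          rw [hC2]
          have s1 : Real.sqrt (r - z) > 0 := Real.sqrt_pos.mpr (by linarith)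
          have s2 : Real.sqrt (2*m) > 0 := Real.sqrt_pos.mpr (by linarith)
          have s3 : Real.sqrt (m^2 - y^2) > 0 := Real.sqrt_pos.mpr (by nlinarith)
          field_simp
  exact p1.trans p2

lemma kern_zero1 {y r z : ℝ} (h : z^2 ≤ y^2) : kern y r z = 0 := by
  unfold kern
  rw [Real.sqrt_eq_zero'.mpr (by linarith), zero_mul, div_zero]

lemma kern_zero2 {y r z : ℝ} (h : r^2 ≤ z^2) : kern y r z = 0 := by
  unfold kern
  have : Real.sqrt (r^2 - z^2) = 0 := Real.sqrt_eq_zero'.mpr (by linarith)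
  rw [this, mul_zero, div_zero]

lemma kern_integral {y r : ℝ} (hy : 0 < y) (hyr : y < r) :
    ∫ z in y..r, kern y r z = Real.pi / 2 := by
  have hd : (0:ℝ) < r^2 - y^2 := by nlinarith
  have hcont : ContinuousOn
      (fun t => (1/2) * Real.arcsin ((2*t^2 - y^2 - r^2)/(r^2 - y^2))) (Icc y r) := by
    apply Continuous.continuousOn
    exact continuous_const.mul (Real.continuous_arcsin.comp (by continuity))
  have := integral_eq_sub_of_hasDerivAt_of_le hyr.le hcont
    (fun z hz => kern_deriv hy hz) (kern_integrable hy hyr)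
  unfold kern
  rw [this]
  have e1 : (2*r^2 - y^2 - r^2)/(r^2 - y^2) = 1 := by
    rw [div_eq_one_iff_eq hd.ne']; ring
  have e2 : (2*y^2 - y^2 - r^2)/(r^2 - y^2) = -1 := by
    rw [div_eq_iff hd.ne']; ring
  rw [e1, e2, Real.arcsin_one, Real.arcsin_neg_one]
  ring

lemma kern_intOn {y r : ℝ} (hy : 0 < y) (hyr : y < r) (hr1 : r ≤ 1) :
    IntegrableOn (kern y r) (Ioc y 1) := by
  have h1 : IntegrableOn (kern y r) (Ioc y r) := (kern_integrable hy hyr).1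
  have h2 : IntegrableOn (kern y r) (Ioc r 1) := by
    have hz : EqOn (kern y r) 0 (Ioc r 1) := by
      intro z hz
      exact kern_zero2 (by nlinarith [hz.1, hz.2, hy.trans hyr])
    exact (integrableOn_congr_fun hz measurableSet_Ioc).mpr (integrableOn_zero)
  have := h1.union h2
  rwa [Ioc_union_Ioc_eq_Ioc hyr.le hr1] at this

lemma kern_total {y r : ℝ} (hy : 0 < y) (hyr : y < r) (hr1 : r ≤ 1) :
    ∫ z in Ioc y 1, kern y r z = Real.pi / 2 := by
  have h1 : IntegrableOn (kern y r) (Ioc y r) := (kern_integrable hy hyr).1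
  have hz : EqOn (kern y r) 0 (Ioc r 1) := by
    intro z hz
    exact kern_zero2 (by nlinarith [hz.1, hz.2, hy.trans hyr])
  have h2 : IntegrableOn (kern y r) (Ioc r 1) :=
    (integrableOn_congr_fun hz measurableSet_Ioc).mpr (integrableOn_zero)
  rw [← Ioc_union_Ioc_eq_Ioc hyr.le hr1,
    setIntegral_union (Ioc_disjoint_Ioc_of_le le_rfl) measurableSet_Ioc h1 h2]
  have e2 : ∫ z in Ioc r 1, kern y r z = 0 := by
    rw [setIntegral_congr_fun measurableSet_Ioc hz]
    simp
  have e1 : ∫ z in Ioc y r, kern y r z = Real.pi / 2 := by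
    rw [← intervalIntegral.integral_of_le hyr.le]
    exact kern_integral hy hyr
  rw [e1, e2, add_zero]

lemma main_aux (a : ℝ → ℝ) (ha : Continuous a)
    (h : ∀ z ∈ Set.Ioo (0 : ℝ) 1,
      (∫ r in z..1, a r * r / Real.sqrt (r ^ 2 - z ^ 2)) = 0)
    {y : ℝ} (hy : y ∈ Set.Ioo (0:ℝ) 1) : (∫ r in y..1, a r * r) = 0 := by
  obtain ⟨hy0, hy1⟩ := hy
  set μ := volume.restrict (Ioc y 1) with hμ
  set f : ℝ → ℝ → ℝ := fun z r => (a r * r) * kern y r z with hf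
  -- measurability
  have hmeas : AEStronglyMeasurable (Function.uncurry f) (μ.prod μ) := by
    apply Measurable.aestronglyMeasurable
    simp only [hf, kern, Function.uncurry]
    apply Measurable.mul
    · exact ((ha.measurable.comp measurable_snd).mul measurable_snd)
    · apply Measurable.div measurable_fst
      exact (Real.continuous_sqrt.measurable.comp
          ((measurable_fst.pow_const 2).sub_const _)).mul
        (Real.continuous_sqrt.measurable.comp
          ((measurable_snd.pow_const 2).sub (measurable_fst.pow_const 2)))
  -- slice integrability for fixed r ∈ Ioc y 1
  have hslice : ∀ r ∈ Ioc y 1, Integrable (fun z => f z r) μ := by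
    intro r hr
    rw [hμ]
    have h1 : IntegrableOn (fun z => f z r) (Ioc y 1) :=
      ((kern_intOn hy0 hr.1 hr.2).const_mul _)
    exact h1
  -- norm integral for fixed r ∈ Ioc y 1
  have hnormint : ∀ r ∈ Ioc y 1, (∫ z, ‖f z r‖ ∂μ) = |a r * r| * (Real.pi/2) := by
    intro r hr
    rw [hμ]
    have e : ∀ z ∈ Ioc y 1, ‖f z r‖ = |a r * r| * kern y r z := by
      intro z hz
      rw [hf]
      simp only
      rw [Real.norm_eq_abs, abs_mul, abs_of_nonneg (kern_nonneg z (by linarith [hz.1]))]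
    rw [setIntegral_congr_fun measurableSet_Ioc e, MeasureTheory.integral_const_mul,
      kern_total hy0 hr.1 hr.2]
  -- product integrability
  have hint : Integrable (Function.uncurry f) (μ.prod μ) := by
    rw [integrable_prod_iff' hmeas]
    constructor
    · rw [hμ]
      refine (ae_restrict_iff' measurableSet_Ioc).mpr (Filter.Eventually.of_forall ?_)
      intro r hr
      exact hslice r hr
    · apply Integrable.congr (f := fun r => |a r * r| * (Real.pi/2))
      · rw [hμ]
        exact Continuous.integrableOn_Ioc (by continuity)
      · rw [hμ]
        refine (ae_restrict_iff' measurableSet_Ioc).mpr (Filter.Eventually.of_forall ?_)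
        intro r hr
        exact (hnormint r hr).symm
  -- Fubini
  have swap := integral_integral_swap hint
  -- LHS is zero
  have lhs0 : (∫ z, ∫ r, f z r ∂μ ∂μ) = 0 := by
    have inner0 : ∀ᵐ z ∂μ, (∫ r, f z r ∂μ) = 0 := by
      have hae := hint.prod_right_ae
      rw [hμ] at hae ⊢
      filter_upwards [hae, (ae_restrict_iff' measurableSet_Ioc).mpr
        (Filter.Eventually.of_forall (fun z (hz : z ∈ Ioc y 1) => hz)),
        ae_restrict_mem measurableSet_Ioc,
        ae_restrict_of_ae (show ∀ᵐ z ∂(volume : Measure ℝ), z ≠ 1 by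
          rw [ae_iff]
          have e : {x : ℝ | ¬ x ≠ 1} = {1} := by ext x; simp
          rw [e]; exact measure_singleton 1)] with z hInt hz2 hzIoc hzne
      have hz0 : 0 < z := lt_trans hy0 hzIoc.1
      have hz1' : z < 1 := lt_of_le_of_ne hzIoc.2 hzne
      have hI1 : IntegrableOn (fun r => f z r) (Ioc y z) :=
        IntegrableOn.mono_set hInt (Ioc_subset_Ioc_right hzIoc.2)
      have hI2 : IntegrableOn (fun r => f z r) (Ioc z 1) :=
        IntegrableOn.mono_set hInt (Ioc_subset_Ioc_left hzIoc.1.le)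
      rw [← Ioc_union_Ioc_eq_Ioc hzIoc.1.le hzIoc.2,
        setIntegral_union (Ioc_disjoint_Ioc_of_le le_rfl) measurableSet_Ioc hI1 hI2]
      have e1 : ∫ r in Ioc y z, f z r = 0 := by
        rw [setIntegral_congr_fun measurableSet_Ioc (g := fun _ => (0:ℝ))]
        · simp
        · intro r hr
          rw [hf]
          simp only
          rw [kern_zero2 (by nlinarith [hr.1, hr.2]), mul_zero]
      have e2 : ∫ r in Ioc z 1, f z r = 0 := by
        rw [← intervalIntegral.integral_of_le hz1'.le]
        have e : ∀ r, f z r = (z / Real.sqrt (z^2 - y^2)) * (a r * r / Real.sqrt (r^2 - z^2)) := by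
          intro r
          rw [hf]
          simp only [kern]
          ring
        simp only [e]
        rw [intervalIntegral.integral_const_mul, h z ⟨hz0, hz1'⟩, mul_zero]
      rw [e1, e2, add_zero]
    calc (∫ z, ∫ r, f z r ∂μ ∂μ) = ∫ z, (0:ℝ) ∂μ := integral_congr_ae inner0
      _ = 0 := integral_zero _ _
  -- RHS
  have rhs : (∫ r, ∫ z, f z r ∂μ ∂μ) = (Real.pi/2) * ∫ r in y..1, a r * r := by
    have inner : ∀ r ∈ Ioc y 1, (∫ z, f z r ∂μ) = (a r * r) * (Real.pi/2) := by
      intro r hr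
      rw [hμ, hf]
      simp only
      rw [MeasureTheory.integral_const_mul, kern_total hy0 hr.1 hr.2]
    rw [hμ]
    rw [setIntegral_congr_fun measurableSet_Ioc (fun r hr => inner r hr)]
    rw [intervalIntegral.integral_of_le hy1.le]
    rw [← MeasureTheory.integral_const_mul]
    congr 1
    ext r
    ring
  rw [lhs0] at swap
  rw [rhs] at swap
  have hπ : (Real.pi/2) ≠ 0 := by positivity
  rcases mul_eq_zero.mp swap.symm with h' | h'
  · exact absurd h' hπ
  · exact h'

lemma final_step (a : ℝ → ℝ) (ha : Continuous a)
    (hI : ∀ y ∈ Set.Ioo (0:ℝ) 1, (∫ r in y..1, a r * r) = 0) :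
    ∀ r ∈ Set.Icc (0:ℝ) 1, a r = 0 := by
  set g : ℝ → ℝ := fun r => a r * r with hg
  have hgc : Continuous g := ha.mul continuous_id
  have key : ∀ x ∈ Set.Ioo (0:ℝ) 1, a x = 0 := by
    intro x hx
    have hΨ : HasDerivAt (fun u => ∫ r in (1:ℝ)..u, g r) (g x) x :=
      intervalIntegral.integral_hasDerivAt_right
        (hgc.intervalIntegrable 1 x)
        hgc.stronglyMeasurable.stronglyMeasurableAtFilter
        hgc.continuousAt
    have hzero : (fun u => ∫ r in (1:ℝ)..u, g r) =ᶠ[nhds x] (fun _ => (0:ℝ)) := by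
      filter_upwards [isOpen_Ioo.mem_nhds hx] with u hu
      rw [intervalIntegral.integral_symm, hI u hu, neg_zero]
    have h0 : HasDerivAt (fun _ : ℝ => (0:ℝ)) (g x) x :=
      hΨ.congr_of_eventuallyEq hzero.symm
    have := h0.unique (hasDerivAt_const x 0)
    rw [hg] at this
    have hx0 : x ≠ 0 := ne_of_gt hx.1
    rcases mul_eq_zero.mp this with h' | h'
    · exact h'
    · exact absurd h' hx0
  have hcl : IsClosed {x : ℝ | a x = 0} := isClosed_eq ha continuous_const
  have hsub : Set.Icc (0:ℝ) 1 ⊆ {x | a x = 0} := by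
    rw [← closure_Ioo (by norm_num : (0:ℝ) ≠ 1)]
    exact closure_minimal (fun x hx => key x hx) hcl
  exact fun r hr => hsub hr

/-- the Abel transform is injective on continuous functions: if
`a : [0,1] → ℝ` is continuous and `∫_z^1 a(r)·r/√(r²−z²) dr = 0` for all
`z ∈ (0,1)`, then `a ≡ 0` on `[0,1]`. -/
theorem stmt4 (a : ℝ → ℝ) (ha : ContinuousOn a (Set.Icc 0 1))
    (h : ∀ z ∈ Set.Ioo (0 : ℝ) 1,
      (∫ r in z..1, a r * r / Real.sqrt (r ^ 2 - z ^ 2)) = 0) :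
    ∀ r ∈ Set.Icc (0 : ℝ) 1, a r = 0 := by
  set c : ℝ → ℝ := fun r => max 0 (min 1 r) with hc
  have hcmem : ∀ r, c r ∈ Set.Icc (0:ℝ) 1 :=
    fun r => ⟨le_max_left _ _, max_le zero_le_one (min_le_left _ _)⟩
  have hccont : Continuous c :=
    continuous_const.max (continuous_const.min continuous_id)
  set a' : ℝ → ℝ := fun r => a (c r) with ha'
  have ha'cont : Continuous a' := ha.comp_continuous hccont hcmem
  have hagree : ∀ r ∈ Set.Icc (0:ℝ) 1, a' r = a r := by
    intro r hr
    rw [ha', hc]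
    simp only
    rw [min_eq_right hr.2, max_eq_right hr.1]
  have h' : ∀ z ∈ Set.Ioo (0 : ℝ) 1,
      (∫ r in z..1, a' r * r / Real.sqrt (r ^ 2 - z ^ 2)) = 0 := by
    intro z hz
    rw [← h z hz]
    apply intervalIntegral.integral_congr
    intro r hr
    rw [Set.uIcc_of_le hz.2.le] at hr
    simp only
    rw [hagree r ⟨le_trans hz.1.le hr.1, hr.2⟩]
  have := final_step a' ha'cont (fun y hy => main_aux a' ha'cont h' hy)
  intro r hr
  rw [← hagree r hr]
  exact this r hr
end

section
/- Let f : ℝ² → ℝ be continuous with f(r,θ) = e^{ikθ} a(r) in polar coordinates for some integer k and continuous a : [0,∞) → ℝ with compact support. Then the integral of f over the line {x ∈ ℝ² : x₁ cos φ + x₂ sin φ = ρ} equals e^{ikφ} · 𝒜_{|k|}a(ρ) for ρ > 0, where 𝒜_k a(ρ) = 2∫_ρ^∞ a(r) T_k(ρ/r) · r/√(r² − ρ²) dr and T_k is the k-th Chebyshev polynomial of the first kind. -/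
open MeasureTheory

/-- for `f(r,θ) = e^{ikθ} a(r)` in polar coordinates, the integral of `f`
over the line `{x : x₁ cos φ + x₂ sin φ = ρ}` equals `e^{ikφ}·𝒜_{|k|}a(ρ)` for `ρ > 0`,
where `𝒜_k a(ρ) = 2∫_ρ^∞ a(r) T_k(ρ/r) r/√(r²−ρ²) dr` and `T_k` is the Chebyshev
polynomial of the first kind. -/
theorem stmt5 (k : ℤ) (a : ℝ → ℝ) (ha : Continuous a) (hsupp : HasCompactSupport a)
    (f : ℝ × ℝ → ℂ) (hf : Continuous f)
    (hpolar : ∀ r : ℝ, 0 ≤ r → ∀ θ : ℝ,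
      f (r * Real.cos θ, r * Real.sin θ) = Complex.exp (Complex.I * k * θ) * a r)
    (φ ρ : ℝ) (hρ : 0 < ρ) :
    (∫ t : ℝ, f (ρ * Real.cos φ - t * Real.sin φ, ρ * Real.sin φ + t * Real.cos φ)) =
      Complex.exp (Complex.I * k * φ) *
        ((2 * ∫ r in Set.Ioi ρ,
          a r * (Polynomial.Chebyshev.T ℝ |k|).eval (ρ / r) * r /
            Real.sqrt (r ^ 2 - ρ ^ 2) : ℝ) : ℂ) := by
  have hρne : ρ ≠ 0 := hρ.ne'
  -- |k| can be replaced by k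
  have hTk : Polynomial.Chebyshev.T ℝ |k| = Polynomial.Chebyshev.T ℝ k := by
    rcases abs_choice k with h | h
    · rw [h]
    · rw [h, Polynomial.Chebyshev.T_neg]
  set s : ℝ → ℝ := fun t => Real.sqrt (ρ ^ 2 + t ^ 2) with hs_def
  have hs_pos : ∀ t, 0 < s t := fun t => Real.sqrt_pos.mpr (by positivity)
  have hs_ne : ∀ t, s t ≠ 0 := fun t => (hs_pos t).ne'
  have hsq : ∀ t, (s t) ^ 2 = ρ ^ 2 + t ^ 2 := fun t => Real.sq_sqrt (by positivity)
  have hs_even : ∀ t, s (-t) = s t := by intro t; simp [hs_def, neg_pow]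
  -- cos and sin of arctan(t/ρ)
  have hsr : ∀ t, Real.sqrt (1 + (t / ρ) ^ 2) = s t / ρ := by
    intro t
    have h1 : 1 + (t / ρ) ^ 2 = (s t / ρ) ^ 2 := by
      rw [div_pow, div_pow, hsq]; field_simp
    rw [h1, Real.sqrt_sq (by positivity)]
  have hcos : ∀ t, Real.cos (Real.arctan (t / ρ)) = ρ / s t := by
    intro t
    rw [Real.cos_arctan, hsr]
    rw [one_div_div]
  have hsin : ∀ t, Real.sin (Real.arctan (t / ρ)) = t / s t := by
    intro t
    rw [Real.sin_arctan, hsr]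
    rw [div_div_div_eq]
    rw [mul_comm ρ (s t), mul_div_mul_right _ _ hρne]
  -- pointwise description of the integrand
  have hpt : ∀ t : ℝ, f (ρ * Real.cos φ - t * Real.sin φ, ρ * Real.sin φ + t * Real.cos φ)
      = Complex.exp (Complex.I * k * φ) *
        (Complex.exp (Complex.I * k * (Real.arctan (t / ρ))) * a (s t)) := by
    intro t
    have h1 : ρ * Real.cos φ - t * Real.sin φ
        = s t * Real.cos (φ + Real.arctan (t / ρ)) := by
      rw [Real.cos_add, hcos, hsin]
      field_simp
      rw [mul_div_cancel_right₀ _ (hs_ne t)]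
    have h2 : ρ * Real.sin φ + t * Real.cos φ
        = s t * Real.sin (φ + Real.arctan (t / ρ)) := by
      rw [Real.sin_add, hcos, hsin]
      field_simp
      rw [mul_div_cancel_right₀ _ (hs_ne t)]
    rw [h1, h2, hpolar (s t) (hs_pos t).le _]
    rw [Complex.ofReal_add, mul_add, Complex.exp_add]
    ring
  -- the inner function
  set h : ℝ → ℂ := fun t =>
    Complex.exp (Complex.I * k * (Real.arctan (t / ρ))) * a (s t) with hh_def
  have hh_cont : Continuous h := by
    have h1 : Continuous fun t : ℝ => Complex.I * k * ((Real.arctan (t / ρ) : ℝ) : ℂ) := by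
      apply continuous_const.mul
      exact Complex.continuous_ofReal.comp
        (Real.continuous_arctan.comp (continuous_id.div_const ρ))
    have h2 : Continuous fun t : ℝ => ((a (s t) : ℝ) : ℂ) :=
      Complex.continuous_ofReal.comp (ha.comp (Real.continuous_sqrt.comp (by continuity)))
    exact (Complex.continuous_exp.comp h1).mul h2
  -- compact support of h
  obtain ⟨M, hM⟩ := hsupp.isBounded.subset_closedBall 0
  have hh_supp : HasCompactSupport h := by
    apply HasCompactSupport.intro (isCompact_Icc (a := -M) (b := M))
    intro t ht
    have habs : M < |t| := by
      simp only [Set.mem_Icc, not_and_or, not_le] at ht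
      rcases ht with h' | h' <;> [exact lt_of_lt_of_le (by linarith) (neg_le_abs t);
        exact lt_of_lt_of_le h' (le_abs_self t)]
    have hst : M < s t := by
      refine lt_of_lt_of_le habs ?_
      calc |t| = Real.sqrt (t ^ 2) := (Real.sqrt_sq_eq_abs t).symm
        _ ≤ s t := Real.sqrt_le_sqrt (by nlinarith)
    have hnm : s t ∉ tsupport a := by
      intro hmem
      have := hM hmem
      rw [Metric.mem_closedBall, Real.dist_eq, sub_zero] at this
      have : s t ≤ M := le_trans (le_abs_self _) this
      linarith
    simp [hh_def, image_eq_zero_of_notMem_tsupport hnm]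
  have hh_int : Integrable h := hh_cont.integrable_of_hasCompactSupport hh_supp
  -- symmetrization
  have hkey : ∀ t : ℝ, h t + h (-t)
      = ((2 * (a (s t) * (Polynomial.Chebyshev.T ℝ k).eval (ρ / s t)) : ℝ) : ℂ) := by
    intro t
    have har : Real.arctan (-t / ρ) = - Real.arctan (t / ρ) := by
      rw [neg_div, Real.arctan_neg]
    set ψ := Real.arctan (t / ρ) with hψ
    have e1 : Complex.I * k * (ψ : ℝ) = ((k : ℝ) * ψ : ℝ) * Complex.I := by
      push_cast; ring
    have e2 : Complex.I * k * ((-ψ : ℝ) : ℂ) = (-((k : ℝ) * ψ) : ℝ) * Complex.I := by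
      push_cast; ring
    rw [hh_def]
    simp only [har, hs_even]
    rw [e1, e2, Complex.exp_mul_I, Complex.exp_mul_I]
    rw [Complex.ofReal_neg, Complex.cos_neg, Complex.sin_neg]
    rw [← Complex.ofReal_cos]
    have : Real.cos ((k : ℝ) * ψ) = (Polynomial.Chebyshev.T ℝ k).eval (ρ / s t) := by
      rw [← hcos t, ← hψ, Polynomial.Chebyshev.T_real_cos]
    rw [this]
    push_cast
    try ring
  -- split the integral over ℝ
  have hsplit : ∫ t, h t = ∫ t in Set.Ioi (0:ℝ), (h t + h (-t)) := by
    have h1 : (∫ t in Set.Iic (0:ℝ), h t) + (∫ t in Set.Ioi (0:ℝ), h t) = ∫ t, h t :=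
      intervalIntegral.integral_Iic_add_Ioi hh_int.integrableOn hh_int.integrableOn
    have h2 : (∫ t in Set.Ioi (0:ℝ), h (-t)) = ∫ t in Set.Iic (0:ℝ), h t := by
      simpa using integral_comp_neg_Ioi (0:ℝ) h
    rw [integral_add hh_int.integrableOn hh_int.comp_neg.integrableOn, h2, ← h1]
    ring
  -- change of variables on the real integral
  have hsub : (∫ t in Set.Ioi (0:ℝ), a (s t) * (Polynomial.Chebyshev.T ℝ k).eval (ρ / s t))
      = ∫ r in Set.Ioi ρ, a r * (Polynomial.Chebyshev.T ℝ k).eval (ρ / r) * r /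
          Real.sqrt (r ^ 2 - ρ ^ 2) := by
    set g : ℝ → ℝ := fun r => Real.sqrt (r ^ 2 - ρ ^ 2) with hg_def
    have himg : g '' Set.Ioi ρ = Set.Ioi 0 := by
      ext y
      constructor
      · rintro ⟨r, hr, rfl⟩
        rw [Set.mem_Ioi] at hr ⊢
        exact Real.sqrt_pos.mpr (by nlinarith)
      · intro hy
        rw [Set.mem_Ioi] at hy
        refine ⟨Real.sqrt (ρ ^ 2 + y ^ 2), ?_, ?_⟩
        · rw [Set.mem_Ioi]
          calc ρ = Real.sqrt (ρ ^ 2) := (Real.sqrt_sq hρ.le).symm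
            _ < Real.sqrt (ρ ^ 2 + y ^ 2) := Real.sqrt_lt_sqrt (by positivity) (by nlinarith)
        · rw [hg_def]
          simp only
          rw [Real.sq_sqrt (by positivity)]
          rw [show ρ ^ 2 + y ^ 2 - ρ ^ 2 = y ^ 2 by ring, Real.sqrt_sq hy.le]
    have hderiv : ∀ r ∈ Set.Ioi ρ, HasDerivWithinAt g (r / Real.sqrt (r ^ 2 - ρ ^ 2))
        (Set.Ioi ρ) r := by
      intro r hr
      rw [Set.mem_Ioi] at hr
      have hpos : 0 < r ^ 2 - ρ ^ 2 := by nlinarith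
      have h1 : HasDerivAt (fun r : ℝ => r ^ 2 - ρ ^ 2) (2 * r) r := by
        simpa using ((hasDerivAt_pow 2 r).sub_const (ρ ^ 2))
      have h2 := (Real.hasDerivAt_sqrt hpos.ne').comp r h1
      have : HasDerivAt g (1 / (2 * Real.sqrt (r ^ 2 - ρ ^ 2)) * (2 * r)) r := h2
      convert this.hasDerivWithinAt using 1
      · rfl
      · rfl
      have : Real.sqrt (r ^ 2 - ρ ^ 2) ≠ 0 := (Real.sqrt_pos.mpr hpos).ne'
      ring
    have hinj : Set.InjOn g (Set.Ioi ρ) := by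
      intro r₁ h₁ r₂ h₂ heq
      rw [Set.mem_Ioi] at h₁ h₂
      have e1 : r₁ ^ 2 - ρ ^ 2 = r₂ ^ 2 - ρ ^ 2 :=
        (Real.sqrt_inj (by nlinarith) (by nlinarith)).mp heq
      nlinarith
    rw [← himg, integral_image_eq_integral_abs_deriv_smul measurableSet_Ioi hderiv hinj]
    apply setIntegral_congr_fun measurableSet_Ioi
    intro r hr
    rw [Set.mem_Ioi] at hr
    have hpos : 0 < r ^ 2 - ρ ^ 2 := by nlinarith
    have hrpos : 0 < r := lt_trans hρ hr
    have hsg : s (g r) = r := by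
      rw [hs_def, hg_def]
      simp only
      rw [Real.sq_sqrt hpos.le, show ρ ^ 2 + (r ^ 2 - ρ ^ 2) = r ^ 2 by ring,
        Real.sqrt_sq hrpos.le]
    simp only [smul_eq_mul]
    rw [hsg, abs_of_nonneg (by positivity)]
    ring
  -- putting everything together
  calc (∫ t : ℝ, f (ρ * Real.cos φ - t * Real.sin φ, ρ * Real.sin φ + t * Real.cos φ))
      = ∫ t : ℝ, Complex.exp (Complex.I * k * φ) * h t := by
        simp only [hpt, hh_def]
    _ = Complex.exp (Complex.I * k * φ) * ∫ t : ℝ, h t := integral_const_mul _ _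
    _ = _ := by
        rw [hsplit]
        simp only [hkey]
        have : (∫ t in Set.Ioi (0:ℝ),
            ((2 * (a (s t) * (Polynomial.Chebyshev.T ℝ k).eval (ρ / s t)) : ℝ) : ℂ))
            = ((∫ t in Set.Ioi (0:ℝ),
              2 * (a (s t) * (Polynomial.Chebyshev.T ℝ k).eval (ρ / s t)) : ℝ) : ℂ) :=
          integral_ofReal
        rw [this, integral_const_mul, hsub, hTk]
end

section
/- If a continuous function f on the closed unit disc has vanishing broken ray transform with set of tomography an open arc E ⊂ S¹, and if f is differentiable in the angular variable with ∂_θ f continuous, then ∂_θ f also has vanishing broken ray transform with respect to a slightly smaller open arc E' ⋐ E. -/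
open MeasureTheory
open scoped RealInnerProductSpace

noncomputable def pt2 (a b : ℝ) : EuclideanSpace ℝ (Fin 2) :=
  (WithLp.equiv 2 (Fin 2 → ℝ)).symm ![a, b]

/-- Rotation of the plane by angle `β` about the origin. -/
noncomputable def rot (β : ℝ) (x : EuclideanSpace ℝ (Fin 2)) : EuclideanSpace ℝ (Fin 2) :=
  pt2 (Real.cos β * (WithLp.equiv 2 (Fin 2 → ℝ)) x 0 - Real.sin β * (WithLp.equiv 2 (Fin 2 → ℝ)) x 1)
      (Real.sin β * (WithLp.equiv 2 (Fin 2 → ℝ)) x 0 + Real.cos β * (WithLp.equiv 2 (Fin 2 → ℝ)) x 1)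

/-- The open arc of the unit circle consisting of the points of angle `θ ∈ (a,b)`. -/
def arc (a b : ℝ) : Set (EuclideanSpace ℝ (Fin 2)) :=
  {p | ∃ θ : ℝ, a < θ ∧ θ < b ∧ p = pt2 (Real.cos θ) (Real.sin θ)}

/-- A broken ray in the closed unit disc, encoded by its successive vertices on the
unit circle, with the reflection law at interior vertices. -/
def IsBrokenRayDisc (n : ℕ) (x : ℕ → EuclideanSpace ℝ (Fin 2)) : Prop :=
  1 ≤ n ∧ (∀ i ≤ n, ‖x i‖ = 1) ∧ (∀ i < n, x i ≠ x (i + 1)) ∧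
  ∀ i, i + 2 ≤ n →
    ‖x (i + 2) - x (i + 1)‖⁻¹ • (x (i + 2) - x (i + 1)) =
      ‖x (i + 1) - x i‖⁻¹ • (x (i + 1) - x i) -
        (2 * ⟪‖x (i + 1) - x i‖⁻¹ • (x (i + 1) - x i), x (i + 1)⟫) • x (i + 1)

/-- The integral of `f` over a broken ray with respect to arc length. -/
noncomputable def brtSum (f : EuclideanSpace ℝ (Fin 2) → ℝ) (n : ℕ)
    (x : ℕ → EuclideanSpace ℝ (Fin 2)) : ℝ :=
  ∑ i ∈ Finset.range n,
    ‖x (i + 1) - x i‖ * ∫ t in (0 : ℝ)..1, f (x i + t • (x (i + 1) - x i))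

/- ### Auxiliary lemmas -/

lemma pt2c0 (a b : ℝ) : pt2 a b 0 = a := rfl
lemma pt2c1 (a b : ℝ) : pt2 a b 1 = b := rfl
lemma rotc0 (β : ℝ) (x : EuclideanSpace ℝ (Fin 2)) :
    rot β x 0 = Real.cos β * x 0 - Real.sin β * x 1 := rfl
lemma rotc1 (β : ℝ) (x : EuclideanSpace ℝ (Fin 2)) :
    rot β x 1 = Real.sin β * x 0 + Real.cos β * x 1 := rfl
lemma addc (u v : EuclideanSpace ℝ (Fin 2)) (i : Fin 2) : (u + v) i = u i + v i := rfl
lemma subc (u v : EuclideanSpace ℝ (Fin 2)) (i : Fin 2) : (u - v) i = u i - v i := rfl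
lemma smulc (t : ℝ) (u : EuclideanSpace ℝ (Fin 2)) (i : Fin 2) : (t • u) i = t * u i := rfl

lemma ext2 (u v : EuclideanSpace ℝ (Fin 2)) (h0 : u 0 = v 0) (h1 : u 1 = v 1) : u = v := by
  ext i; fin_cases i <;> assumption

lemma inner_two (u v : EuclideanSpace ℝ (Fin 2)) : ⟪u, v⟫ = u 0 * v 0 + u 1 * v 1 := by
  simp [EuclideanSpace.inner_eq_star_dotProduct]
  ring

lemma inner_rot (β : ℝ) (u v : EuclideanSpace ℝ (Fin 2)) : ⟪rot β u, rot β v⟫ = ⟪u, v⟫ := by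
  simp only [inner_two, rotc0, rotc1]
  linear_combination (u 0 * v 0 + u 1 * v 1) * (Real.sin_sq_add_cos_sq β)

lemma norm_rot (β : ℝ) (x : EuclideanSpace ℝ (Fin 2)) : ‖rot β x‖ = ‖x‖ := by
  have h := inner_rot β x x
  rw [real_inner_self_eq_norm_sq, real_inner_self_eq_norm_sq] at h
  nlinarith [norm_nonneg (rot β x), norm_nonneg x]

lemma rot_add (β : ℝ) (u v : EuclideanSpace ℝ (Fin 2)) : rot β (u + v) = rot β u + rot β v := by
  apply ext2 <;> simp only [rotc0, rotc1, addc] <;> ring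

lemma rot_smul (β t : ℝ) (u : EuclideanSpace ℝ (Fin 2)) : rot β (t • u) = t • rot β u := by
  apply ext2 <;> simp only [rotc0, rotc1, smulc] <;> ring

lemma rot_sub (β : ℝ) (u v : EuclideanSpace ℝ (Fin 2)) : rot β (u - v) = rot β u - rot β v := by
  apply ext2 <;> simp only [rotc0, rotc1, subc] <;> ring

lemma rot_rot (β γ : ℝ) (x : EuclideanSpace ℝ (Fin 2)) : rot β (rot γ x) = rot (β + γ) x := by
  apply ext2 <;> simp only [rotc0, rotc1, Real.cos_add, Real.sin_add] <;> ring

lemma rot_zero (x : EuclideanSpace ℝ (Fin 2)) : rot 0 x = x := by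
  apply ext2 <;> simp [rotc0, rotc1]

lemma rot_inj (β : ℝ) {u v : EuclideanSpace ℝ (Fin 2)} (h : rot β u = rot β v) : u = v := by
  have := congrArg (rot (-β)) h
  rwa [rot_rot, rot_rot, neg_add_cancel, rot_zero, rot_zero] at this

lemma rot_pt2 (β θ : ℝ) :
    rot β (pt2 (Real.cos θ) (Real.sin θ)) = pt2 (Real.cos (θ + β)) (Real.sin (θ + β)) := by
  apply ext2 <;>
    simp only [rotc0, rotc1, pt2c0, pt2c1, Real.cos_add, Real.sin_add] <;> ring

lemma cont_coord (i : Fin 2) : Continuous fun x : EuclideanSpace ℝ (Fin 2) => x i :=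
  (continuous_apply i).comp (PiLp.continuous_ofLp (p := 2) (β := fun _ : Fin 2 => ℝ))

lemma cont_pt2 {α : Type*} [TopologicalSpace α] {A B : α → ℝ} (hA : Continuous A)
    (hB : Continuous B) : Continuous fun x => pt2 (A x) (B x) := by
  unfold pt2
  refine (PiLp.continuous_toLp (p := 2) (β := fun _ : Fin 2 => ℝ)).comp (continuous_pi fun i => ?_)
  fin_cases i <;> simp only [Matrix.cons_val_zero, Matrix.cons_val_one, Matrix.head_cons] <;>
    [exact hA; exact hB]

lemma rot_cont (β : ℝ) : Continuous (rot β) :=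
  cont_pt2 ((continuous_const.mul (cont_coord 0)).sub (continuous_const.mul (cont_coord 1)))
    ((continuous_const.mul (cont_coord 0)).add (continuous_const.mul (cont_coord 1)))

/-- The rotated family of a broken ray is a broken ray. -/
lemma brd_rot (β : ℝ) {n : ℕ} {x : ℕ → EuclideanSpace ℝ (Fin 2)}
    (h : IsBrokenRayDisc n x) : IsBrokenRayDisc n (fun i => rot β (x i)) := by
  obtain ⟨hn, hnorm, hne, hrefl⟩ := h
  refine ⟨hn, fun i hi => by rw [norm_rot]; exact hnorm i hi,
    fun i hi hcontra => hne i hi (rot_inj β hcontra), fun i hi => ?_⟩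
  simp only [← rot_sub, norm_rot, ← rot_smul, inner_rot]
  exact congrArg (rot β) (hrefl i hi)

/-- The derivative of `β ↦ f (rot β y)` at an arbitrary point. -/
lemma deriv_shift {f g : EuclideanSpace ℝ (Fin 2) → ℝ}
    (hderiv : ∀ x : EuclideanSpace ℝ (Fin 2),
      HasDerivAt (fun β : ℝ => f (rot β x)) (g x) 0)
    (y : EuclideanSpace ℝ (Fin 2)) (β : ℝ) :
    HasDerivAt (fun β' : ℝ => f (rot β' y)) (g (rot β y)) β := by
  have h := hderiv (rot β y)
  have hφ : HasDerivAt (fun β' : ℝ => β' - β) 1 β := (hasDerivAt_id β).sub_const β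
  have h2 := HasDerivAt.comp β (by simpa using h) hφ
  have : ((fun γ : ℝ => f (rot γ (rot β y))) ∘ fun β' => β' - β) = fun β' => f (rot β' y) := by
    funext β'
    simp [Function.comp, rot_rot, sub_add_cancel]
  rw [this] at h2
  simpa using h2

/-- Points on segments between unit vectors lie in the closed unit ball. -/
lemma seg_norm_le {u v : EuclideanSpace ℝ (Fin 2)} (hu : ‖u‖ = 1) (hv : ‖v‖ = 1)
    {t : ℝ} (ht0 : 0 ≤ t) (ht1 : t ≤ 1) : ‖u + t • (v - u)‖ ≤ 1 := by
  have : u + t • (v - u) = (1 - t) • u + t • v := by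
    rw [smul_sub, sub_smul, one_smul]; abel
  rw [this]
  calc ‖(1 - t) • u + t • v‖ ≤ ‖(1 - t) • u‖ + ‖t • v‖ := norm_add_le _ _
    _ = |1 - t| * ‖u‖ + |t| * ‖v‖ := by rw [norm_smul, norm_smul]; rfl
    _ = (1 - t) + t := by rw [hu, hv, abs_of_nonneg (by linarith), abs_of_nonneg ht0]; ring
    _ = 1 := by ring

theorem stmt7 (a b a' b' : ℝ) (hab : a < a') (ha'b' : a' < b') (hb'b : b' < b)
    (f g : EuclideanSpace ℝ (Fin 2) → ℝ) (hf : Continuous f) (hg : Continuous g)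
    (hderiv : ∀ x : EuclideanSpace ℝ (Fin 2),
      HasDerivAt (fun β : ℝ => f (rot β x)) (g x) 0)
    (hvanish : ∀ (n : ℕ) (x : ℕ → EuclideanSpace ℝ (Fin 2)), IsBrokenRayDisc n x →
      x 0 ∈ arc a b → x n ∈ arc a b → brtSum f n x = 0) :
    ∀ (n : ℕ) (x : ℕ → EuclideanSpace ℝ (Fin 2)), IsBrokenRayDisc n x →
      x 0 ∈ arc a' b' → x n ∈ arc a' b' → brtSum g n x = 0 := by
  intro n x hbr hx0 hxn
  obtain ⟨hn, hnorm, hne, hrefl⟩ := hbr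
  set ε : ℝ := min (a' - a) (b - b') with hε
  have hεpos : 0 < ε := lt_min (by linarith) (by linarith)
  -- the function F
  set F : ℝ → ℝ := fun β => ∑ i ∈ Finset.range n,
    ‖x (i + 1) - x i‖ * ∫ t in (0 : ℝ)..1, f (rot β (x i + t • (x (i + 1) - x i))) with hF
  -- F β equals the brt of f over the rotated ray
  have hFeq : ∀ β : ℝ, brtSum f n (fun i => rot β (x i)) = F β := by
    intro β
    unfold brtSum
    refine Finset.sum_congr rfl fun i _ => ?_
    rw [← rot_sub, norm_rot]
    congr 1
    refine intervalIntegral.integral_congr fun t _ => ?_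
    rw [rot_add, rot_smul, rot_sub]
  -- F vanishes near 0
  have hFzero : ∀ β ∈ Metric.ball (0 : ℝ) ε, F β = 0 := by
    intro β hβ
    rw [Metric.mem_ball, Real.dist_eq, sub_zero] at hβ
    have hβ1 : -ε < β := neg_lt_of_abs_lt hβ
    have hβ2 : β < ε := lt_of_abs_lt hβ
    rw [← hFeq]
    refine hvanish n _ (brd_rot β ⟨hn, hnorm, hne, hrefl⟩) ?_ ?_
    · obtain ⟨θ, hθ1, hθ2, hθ3⟩ := hx0
      refine ⟨θ + β, ?_, ?_, by simp only [hθ3, rot_pt2]⟩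
      · have : ε ≤ a' - a := min_le_left _ _
        linarith
      · have : ε ≤ b - b' := min_le_right _ _
        linarith
    · obtain ⟨θ, hθ1, hθ2, hθ3⟩ := hxn
      refine ⟨θ + β, ?_, ?_, by simp only [hθ3, rot_pt2]⟩
      · have : ε ≤ a' - a := min_le_left _ _
        linarith
      · have : ε ≤ b - b' := min_le_right _ _
        linarith
  -- bound for g on the closed unit ball
  obtain ⟨C, hC⟩ := (isCompact_closedBall (0 : EuclideanSpace ℝ (Fin 2)) 1).exists_bound_of_continuousOn hg.continuousOn
  -- derivative of each summand
  have hterm : ∀ i < n, HasDerivAt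
      (fun β : ℝ => ∫ t in (0 : ℝ)..1, f (rot β (x i + t • (x (i + 1) - x i))))
      (∫ t in (0 : ℝ)..1, g (x i + t • (x (i + 1) - x i))) 0 := by
    intro i hi
    set y : ℝ → EuclideanSpace ℝ (Fin 2) := fun t => x i + t • (x (i + 1) - x i) with hy
    have hycont : Continuous y := continuous_const.add (continuous_id.smul continuous_const)
    have hynorm : ∀ t ∈ Set.uIoc (0 : ℝ) 1, ‖y t‖ ≤ 1 := by
      intro t ht
      rw [Set.uIoc_of_le (by norm_num : (0:ℝ) ≤ 1)] at ht
      exact seg_norm_le (hnorm i (by omega)) (hnorm (i + 1) (by omega)) ht.1.le ht.2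
    have key := intervalIntegral.hasDerivAt_integral_of_dominated_loc_of_deriv_le
      (F := fun β t => f (rot β (y t))) (F' := fun β t => g (rot β (y t)))
      (x₀ := (0 : ℝ)) (a := (0 : ℝ)) (b := (1 : ℝ)) (bound := fun _ => C)
      (s := Metric.ball 0 1) (μ := volume) (Metric.ball_mem_nhds 0 one_pos)
      (Filter.Eventually.of_forall fun β =>
        ((hf.comp ((rot_cont β).comp hycont)).aestronglyMeasurable))
      ((hf.comp ((rot_cont 0).comp hycont)).intervalIntegrable 0 1)
      ((hg.comp ((rot_cont 0).comp hycont)).aestronglyMeasurable)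
      ?_ (intervalIntegrable_const) ?_
    · have h2 := key.2
      simp only [rot_zero] at h2
      exact h2
    · refine Filter.Eventually.of_forall fun t ht β _ => ?_
      refine hC _ ?_
      rw [Metric.mem_closedBall, dist_zero_right, norm_rot]
      exact hynorm t ht
    · exact Filter.Eventually.of_forall fun t _ β _ => deriv_shift hderiv (y t) β
  -- derivative of F at 0
  have hFD : HasDerivAt F (brtSum g n x) 0 := by
    unfold brtSum
    rw [hF]
    refine HasDerivAt.fun_sum fun i hi => ?_
    exact (hterm i (Finset.mem_range.mp hi)).const_mul _
  -- F is eventually 0 near 0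
  have hFev : F =ᶠ[nhds (0 : ℝ)] fun _ => (0 : ℝ) := by
    filter_upwards [Metric.ball_mem_nhds (0 : ℝ) hεpos] with β hβ
    exact hFzero β hβ
  have hzero : HasDerivAt (fun _ : ℝ => (0 : ℝ)) (brtSum g n x) 0 :=
    hFD.congr_of_eventuallyEq hFev.symm
  have := hzero.unique (hasDerivAt_const 0 0)
  linarith [this]
end

section
/- Let f : T² → ℂ be continuous on the torus T² = ℝ²/ℤ² and suppose the integral of f over every closed geodesic of T² vanishes. Then f ≡ 0. -/
set_option maxHeartbeats 1000000
open MeasureTheory Set Function intervalIntegral Complex Real AddCircle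

noncomputable def eChar (m : ℤ) (x : ℝ) : ℂ :=
  Complex.exp (2 * Real.pi * Complex.I * (-(m:ℂ)) * (x:ℂ))

@[fun_prop]
lemma eChar_cont (m : ℤ) : Continuous (eChar m) :=
  Complex.continuous_exp.comp (continuous_const.mul Complex.continuous_ofReal)

lemma eChar_per (m : ℤ) (x : ℝ) : eChar m (x + 1) = eChar m x := by
  unfold eChar
  have h1 : (2 * (Real.pi:ℂ) * Complex.I * (-(m:ℂ)) * (((x:ℝ) + 1 : ℝ) : ℂ))
      = 2 * (Real.pi:ℂ) * Complex.I * (-(m:ℂ)) * (x:ℂ) + ((-m : ℤ) : ℂ) * (2 * (Real.pi:ℂ) * Complex.I) := by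
    push_cast; ring
  rw [h1, Complex.exp_add, Complex.exp_int_mul_two_pi_mul_I, mul_one]

lemma eChar_zero (x : ℝ) : eChar 0 x = 1 := by
  unfold eChar; norm_num

lemma eChar_mul_shift (m n : ℤ) (t x y : ℝ) :
    eChar m (x + t * ((-n : ℤ) : ℝ)) * eChar n (y + t * ((m : ℤ) : ℝ))
      = eChar m x * eChar n y := by
  unfold eChar
  rw [← Complex.exp_add, ← Complex.exp_add]
  congr 1
  push_cast
  ring

lemma swapCont (h : ℝ → ℝ → ℂ) (hc : Continuous fun p : ℝ × ℝ => h p.1 p.2) :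
    ∫ a in (0:ℝ)..1, ∫ b in (0:ℝ)..1, h a b = ∫ b in (0:ℝ)..1, ∫ a in (0:ℝ)..1, h a b := by
  have h01 : (0:ℝ) ≤ 1 := zero_le_one
  simp_rw [intervalIntegral.integral_of_le h01]
  rw [MeasureTheory.integral_integral_swap]
  rw [Measure.prod_restrict]
  have : IntegrableOn (fun p : ℝ × ℝ => h p.1 p.2) (Icc (0:ℝ) 1 ×ˢ Icc (0:ℝ) 1) (volume.prod volume) :=
    hc.continuousOn.integrableOn_compact (isCompact_Icc.prod isCompact_Icc)
  exact this.mono_set (Set.prod_mono Ioc_subset_Icc_self Ioc_subset_Icc_self)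

lemma shiftInt (k : ℝ → ℂ) (hp : ∀ u, k (u + 1) = k u) (c : ℝ) :
    ∫ x in (0:ℝ)..1, k (x + c) = ∫ x in (0:ℝ)..1, k x := by
  have hper : Function.Periodic k 1 := hp
  rw [intervalIntegral.integral_comp_add_right k c, add_comm (1:ℝ) c]
  have := hper.intervalIntegral_add_eq c 0
  simpa using this

lemma coeffZero (f : ℝ × ℝ → ℂ) (hf : Continuous f)
    (hper : ∀ x y : ℝ, f (x + 1, y) = f (x, y) ∧ f (x, y + 1) = f (x, y))
    (hgeo : ∀ (x : ℝ × ℝ) (p q : ℤ), ¬(p = 0 ∧ q = 0) →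
      (∫ t in (0 : ℝ)..1, f (x.1 + t * p, x.2 + t * q)) = 0) (m n : ℤ) :
    (∫ x in (0:ℝ)..1, eChar m x * ∫ y in (0:ℝ)..1, eChar n y * f (x, y)) = 0 := by
  by_cases h0 : m = 0 ∧ n = 0
  · obtain ⟨hm, hn⟩ := h0
    subst hm; subst hn
    have hz : ∀ x : ℝ, (∫ y in (0:ℝ)..1, f (x, y)) = 0 := by
      intro x
      have := hgeo (x, 0) 0 1 (by simp)
      simpa using this
    simp only [eChar_zero, one_mul, hz, intervalIntegral.integral_zero]
  · set H : ℝ → ℝ → ℂ := fun u v => eChar m u * (eChar n v * f (u, v)) with hH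
    have Hcont : Continuous fun p : ℝ × ℝ => H p.1 p.2 :=
      ((eChar_cont m).comp continuous_fst).mul
        (((eChar_cont n).comp continuous_snd).mul hf)
    have HperU : ∀ u v, H (u + 1) v = H u v := by
      intro u v; simp only [hH]; rw [eChar_per, (hper u v).1]
    have HperV : ∀ u v, H u (v + 1) = H u v := by
      intro u v; simp only [hH]; rw [eChar_per, (hper u v).2]
    have hpq : ¬((-n : ℤ) = 0 ∧ (m : ℤ) = 0) := fun hc => h0 ⟨hc.2, neg_eq_zero.mp hc.1⟩
    have key1 : ∀ t x y : ℝ,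
        H (x + t * ((-n : ℤ) : ℝ)) (y + t * ((m : ℤ) : ℝ))
          = eChar m x * (eChar n y * f (x + t * ((-n : ℤ) : ℝ), y + t * ((m : ℤ) : ℝ))) := by
      intro t x y
      simp only [hH]
      rw [← mul_assoc, ← mul_assoc, eChar_mul_shift]
    have step1 : ∀ x y : ℝ,
        (∫ t in (0:ℝ)..1, H (x + t * ((-n : ℤ) : ℝ)) (y + t * ((m : ℤ) : ℝ))) = 0 := by
      intro x y
      have hg := hgeo (x, y) (-n) m hpq
      simp only [key1]
      rw [intervalIntegral.integral_const_mul, intervalIntegral.integral_const_mul]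
      simp only [Prod.fst, Prod.snd] at hg
      rw [hg, mul_zero, mul_zero]
    set K : ℝ → ℂ := fun u => ∫ v in (0:ℝ)..1, H u v with hK
    have Kcont : Continuous K := by
      apply continuous_parametric_intervalIntegral_of_continuous' (f := H) (μ := volume) _ 0 1
      exact Hcont
    have KperU : ∀ u, K (u + 1) = K u := by
      intro u; simp only [hK]; simp only [HperU]
    have A1 : (∫ t in (0:ℝ)..1, ∫ x in (0:ℝ)..1, K (x + t * ((-n : ℤ) : ℝ)))
        = ∫ x in (0:ℝ)..1, K x := by
      have h1 : ∀ t : ℝ, (∫ x in (0:ℝ)..1, K (x + t * ((-n : ℤ) : ℝ)))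
          = ∫ x in (0:ℝ)..1, K x := fun t => shiftInt K KperU _
      simp only [h1]
      simp
    have A2 : (∫ t in (0:ℝ)..1, ∫ x in (0:ℝ)..1, K (x + t * ((-n : ℤ) : ℝ)))
        = ∫ x in (0:ℝ)..1, ∫ t in (0:ℝ)..1, K (x + t * ((-n : ℤ) : ℝ)) := by
      exact swapCont (fun t x => K (x + t * ((-n : ℤ) : ℝ))) (by fun_prop)
    have A3 : ∀ x : ℝ, (∫ t in (0:ℝ)..1, K (x + t * ((-n : ℤ) : ℝ))) = 0 := by
      intro x
      have B1 : ∀ t : ℝ, K (x + t * ((-n : ℤ) : ℝ))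
          = ∫ y in (0:ℝ)..1, H (x + t * ((-n : ℤ) : ℝ)) (y + t * ((m : ℤ) : ℝ)) := by
        intro t
        simp only [hK]
        exact (shiftInt (fun v => H (x + t * ((-n : ℤ) : ℝ)) v)
          (fun v => HperV _ v) (t * ((m : ℤ) : ℝ))).symm
      have C2 := swapCont (fun t y => H (x + t * ((-n : ℤ) : ℝ)) (y + t * ((m : ℤ) : ℝ)))
        (by fun_prop)
      simp only [B1]
      rw [C2]
      have C3 : ∀ y : ℝ, (∫ t in (0:ℝ)..1,
          H (x + t * ((-n : ℤ) : ℝ)) (y + t * ((m : ℤ) : ℝ))) = 0 := fun y => step1 x y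
      simp only [C3]
      simp
    have hgoal : (∫ x in (0:ℝ)..1, eChar m x * ∫ y in (0:ℝ)..1, eChar n y * f (x, y))
        = ∫ x in (0:ℝ)..1, K x := by
      simp only [hK, hH]
      simp_rw [intervalIntegral.integral_const_mul]
    rw [hgoal, ← A1, A2]
    simp only [A3]
    simp


lemma zero_of_fourier (g : ℝ → ℂ) (hg : Continuous g) (hp : ∀ u, g (u + 1) = g u)
    (h : ∀ m : ℤ, (∫ x in (0:ℝ)..1,
        Complex.exp (2 * Real.pi * Complex.I * (-(m:ℂ)) * (x:ℂ)) * g x) = 0) :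
    ∀ x, g x = 0 := by
  haveI : Fact ((0:ℝ) < 1) := ⟨one_pos⟩
  have hper : Function.Periodic g 1 := hp
  set G : AddCircle (1:ℝ) → ℂ := AddCircle.liftIco 1 0 g with hG
  have hGcoe : ∀ x : ℝ, G (x : AddCircle (1:ℝ)) = g x := by
    intro x
    have hmem : Int.fract x ∈ Ico (0:ℝ) 1 := ⟨Int.fract_nonneg x, Int.fract_lt_one x⟩
    have h1 : (x : AddCircle (1:ℝ)) = ((Int.fract x : ℝ) : AddCircle (1:ℝ)) := by
      have hx : x = Int.fract x + (⌊x⌋ : ℤ) • (1:ℝ) := by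
        rw [zsmul_eq_mul, mul_one]; exact (Int.fract_add_floor x).symm
      conv_lhs => rw [hx]
      rw [AddCircle.coe_add, AddCircle.coe_zsmul, AddCircle.coe_period, smul_zero, add_zero]
    have h2 : g x = g (Int.fract x) := by
      have h3 : g (x - ⌊x⌋ • (1:ℝ)) = g x := hper.sub_zsmul_eq ⌊x⌋
      rw [zsmul_eq_mul, mul_one, Int.self_sub_floor] at h3
      exact h3.symm
    rw [h1, h2, hG, AddCircle.liftIco_zero_coe_apply hmem]
  have hGcont : Continuous G := by
    apply AddCircle.liftIco_zero_continuous
    · exact (hp 0).symm.trans (by norm_num)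
    · exact hg.continuousOn
  have hcoeff : ∀ n : ℤ, fourierCoeff G n = 0 := by
    intro n
    rw [fourierCoeff_eq_intervalIntegral G n 0]
    rw [show ((0:ℝ) + 1) = 1 by norm_num]
    have key : (∫ x in (0:ℝ)..1, (fourier (-n) (x : AddCircle (1:ℝ)) : ℂ) • G x) = 0 := by
      rw [← h n]
      apply intervalIntegral.integral_congr
      intro x _
      show (fourier (-n)) (x : AddCircle (1:ℝ)) • G (x : AddCircle (1:ℝ))
          = Complex.exp (2 * Real.pi * Complex.I * (-(n:ℂ)) * (x:ℂ)) * g x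
      rw [hGcoe x, fourier_coe_apply, smul_eq_mul]
      norm_num
    rw [key, smul_zero]
  -- L² step
  let g₀ : C(AddCircle (1:ℝ), ℂ) := ⟨G, hGcont⟩
  let F2 : Lp ℂ 2 (@haarAddCircle (1:ℝ) _) := ContinuousMap.toLp 2 _ ℂ g₀
  have hF2 : ∀ n : ℤ, fourierCoeff (F2 : AddCircle (1:ℝ) → ℂ) n = 0 := by
    intro n
    rw [← hcoeff n]
    apply MeasureTheory.integral_congr_ae
    filter_upwards [ContinuousMap.coeFn_toLp (p := 2) (μ := @haarAddCircle (1:ℝ) _) (𝕜 := ℂ) g₀]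
      with t ht
    rw [ht]; rfl
  have hrepr : fourierBasis.repr F2 = 0 := by
    ext n
    rw [fourierBasis_repr F2 n, hF2 n]
    rfl
  have hF20 : F2 = 0 := fourierBasis.repr.map_eq_zero_iff.mp hrepr
  have hae : G =ᵐ[@haarAddCircle (1:ℝ) _] (fun _ => 0) := by
    have h1 : (F2 : AddCircle (1:ℝ) → ℂ) =ᵐ[@haarAddCircle (1:ℝ) _] G :=
      ContinuousMap.coeFn_toLp (p := 2) (μ := @haarAddCircle (1:ℝ) _) (𝕜 := ℂ) g₀
    have h2 : (F2 : AddCircle (1:ℝ) → ℂ) =ᵐ[@haarAddCircle (1:ℝ) _] (fun _ => 0) := by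
      rw [hF20]; exact Lp.coeFn_zero _ _ _
    exact h1.symm.trans h2
  have hGzero : G = fun _ => 0 :=
    (Continuous.ae_eq_iff_eq _ hGcont continuous_const).mp hae
  intro x
  rw [← hGcoe x, hGzero]


/-- a continuous function on the torus `T² = ℝ²/ℤ²` (encoded as a
ℤ²-periodic continuous function on ℝ²) whose integral over every closed geodesic of
`T²` vanishes is identically zero. -/
theorem stmt13 (f : ℝ × ℝ → ℂ) (hf : Continuous f)
    (hper : ∀ x y : ℝ, f (x + 1, y) = f (x, y) ∧ f (x, y + 1) = f (x, y))
    (hgeo : ∀ (x : ℝ × ℝ) (p q : ℤ), ¬(p = 0 ∧ q = 0) →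
      (∫ t in (0 : ℝ)..1, f (x.1 + t * p, x.2 + t * q)) = 0) :
    ∀ x, f x = 0 := by
  have hco := coeffZero f hf hper hgeo
  have hg : ∀ n : ℤ, ∀ a : ℝ, (∫ y in (0:ℝ)..1, eChar n y * f (a, y)) = 0 := by
    intro n
    apply zero_of_fourier (fun a => ∫ y in (0:ℝ)..1, eChar n y * f (a, y))
    · apply continuous_parametric_intervalIntegral_of_continuous'
        (f := fun a y => eChar n y * f (a, y)) (μ := volume) _ 0 1
      show Continuous fun p : ℝ × ℝ => eChar n p.2 * f (p.1, p.2)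
      have := eChar_cont n
      fun_prop
    · intro u
      have hfe : ∀ y : ℝ, f (u + 1, y) = f (u, y) := fun y => (hper u y).1
      simp only [hfe]
    · intro m2
      have := hco m2 n
      simpa [eChar] using this
  intro x
  have hz := zero_of_fourier (fun y => f (x.1, y)) (hf.comp (by fun_prop))
    (fun u => (hper x.1 u).2)
    (fun k => by simpa [eChar] using hg k x.1) x.2
  simpa using hz
end
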